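/- Let X be a bounded geometry metric space which is a space of graphs associated to a sequence (X_n) of finite connected graphs: as a set X = ⊔_n X_n, the metric of X restricts to the graph (edge-path) metric on each X_n, and d(X_n, X \ X_n) → ∞ as n → ∞. Suppose X has large girth, i.e. girth(X_n) → ∞ as n → ∞, and every vertex of every X_n has degree at least three. Then X does not have ULA. -/

import Mathlib

/-- `N_R(E)`, the `R`-neighbourhood of `E`. -/
def nbhd {X : Type*} [MetricSpace X] (R : ℝ) (E : Set X) : Set X :=
  {y | ∃ e ∈ E, dist y e ≤ R}

/-- `∂_R E = N_R(E) \ E`. -/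
def bdry {X : Type*} [MetricSpace X] (R : ℝ) (E : Set X) : Set X :=
  nbhd R E \ E

/-- Bounded geometry. -/
def BoundedGeometry (X : Type*) [MetricSpace X] : Prop :=
  ∀ R : ℝ, 0 < R → ∃ N : ℕ, ∀ x : X,
    {y | dist x y ≤ R}.Finite ∧ {y | dist x y ≤ R}.ncard ≤ N

/-- A probability measure on `X`, as a function. -/
def IsProbFn {X : Type*} (μ : X → ℝ) : Prop :=
  (∀ x, 0 ≤ μ x) ∧ Summable μ ∧ ∑' x, μ x = 1

/-- `μ(E)`. -/
noncomputable def measOf {X : Type*} (μ : X → ℝ) (E : Set X) : ℝ := ∑' x : E, μ x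

/-- Uniform local amenability. -/
def ULA (X : Type*) [MetricSpace X] : Prop :=
  ∀ R : ℝ, 0 < R → ∀ ε : ℝ, 0 < ε → ∃ S : ℝ, 0 < S ∧
    ∀ F : Set X, F.Finite → ∃ E : Set X, E.Finite ∧
      EMetric.diam E ≤ ENNReal.ofReal S ∧
      ((bdry R E ∩ F).ncard : ℝ) < ε * ((E ∩ F).ncard : ℝ)

/-- Measured uniform local amenability. -/
def ULAmu (X : Type*) [MetricSpace X] : Prop :=
  ∀ R : ℝ, 0 < R → ∀ ε : ℝ, 0 < ε → ∃ S : ℝ, 0 < S ∧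
    ∀ μ : X → ℝ, IsProbFn μ → ∃ E : Set X, E.Finite ∧
      EMetric.diam E ≤ ENNReal.ofReal S ∧
      measOf μ (bdry R E) < ε * measOf μ E

/-- Coarse embedding. -/
def CoarseEmbedding {X Y : Type*} [MetricSpace X] [MetricSpace Y] (f : X → Y) : Prop :=
  ∃ ρm ρp : ℝ → ℝ, Monotone ρm ∧ Monotone ρp ∧
    Filter.Tendsto ρm Filter.atTop Filter.atTop ∧
    ∀ x₁ x₂ : X, ρm (dist x₁ x₂) ≤ dist (f x₁) (f x₂) ∧
      dist (f x₁) (f x₂) ≤ ρp (dist x₁ x₂)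

open SimpleGraph

section GraphAux

variable {W : Type*} [DecidableEq W] {G : SimpleGraph W}

lemma aux_eq_snd_of_mem_edges {u b v w : W} (h2 : G.Adj u b) (q2 : G.Walk b v)
    (hq : (Walk.cons h2 q2).IsPath) (hw : s(u, w) ∈ (Walk.cons h2 q2).edges) : w = b := by
  rw [Walk.edges_cons] at hw
  rcases List.mem_cons.mp hw with h | h
  · rcases Sym2.eq_iff.mp h with ⟨-, rfl⟩ | ⟨h1, rfl⟩
    · rfl
    · exact h1
  · exact absurd (Walk.fst_mem_support_of_mem_edges q2 h)
      ((Walk.cons_isPath_iff h2 q2).mp hq).2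

lemma aux_concat_isPath {u v w : W} {p : G.Walk u v} (hp : p.IsPath) (h : G.Adj v w)
    (hw : w ∉ p.support) : (p.concat h).IsPath := by
  have h1 : (Walk.cons h.symm p.reverse).IsPath := by
    rw [Walk.cons_isPath_iff]
    exact ⟨hp.reverse, by rwa [Walk.support_reverse, List.mem_reverse]⟩
  have h2 : (p.concat h).reverse = Walk.cons h.symm p.reverse := Walk.reverse_concat p h
  have h3 : ((p.concat h).reverse).IsPath := by rw [h2]; exact h1
  simpa only [Walk.reverse_reverse] using h3.reverse

/-- From a path `r : u → x` meeting a path `q : u → v` only at `u` and `x`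
(and sharing no edges), we get a cycle of length `≤ r.length + q.length`. -/
lemma cycleH {u v x : W} (q : G.Walk u v) (hq : q.IsPath) (r : G.Walk u x) (hr : r.IsPath)
    (hx : x ∈ q.support) (hxu : x ≠ u)
    (hint : ∀ y ∈ r.support, y ∈ q.support → y = u ∨ y = x)
    (hfe : ∀ e ∈ r.edges, e ∉ q.edges) :
    ∃ (w : W) (c : G.Walk w w), c.IsCycle ∧ c.length ≤ r.length + q.length := by
  have hq₁path : (q.takeUntil x hx).IsPath := hq.takeUntil hx
  have hq₁len : (q.takeUntil x hx).length ≤ q.length := Walk.length_takeUntil_le q hx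
  set t := (q.takeUntil x hx).reverse with ht
  have htpath : t.IsPath := hq₁path.reverse
  refine ⟨u, r.append t, ?_, ?_⟩
  · rw [Walk.isCycle_def]
    refine ⟨⟨?_⟩, ?_, ?_⟩
    · rw [Walk.edges_append]
      refine List.Nodup.append hr.isTrail.edges_nodup htpath.isTrail.edges_nodup ?_
      intro e her het
      have heq : e ∈ (q.takeUntil x hx).edges := by
        rwa [ht, Walk.edges_reverse, List.mem_reverse] at het
      exact hfe e her (Walk.edges_takeUntil_subset q hx heq)
    · intro hnil
      have h0 := congrArg Walk.length hnil
      rw [Walk.length_append] at h0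
      simp only [Walk.length_nil] at h0
      have : r.length = 0 := by omega
      exact hxu (Walk.eq_of_length_eq_zero this).symm
    · have hsupp : (r.append t).support.tail = r.support.tail ++ t.support.tail := by
        rw [Walk.support_append, List.tail_append_of_ne_nil (r.support_ne_nil)]
      rw [hsupp]
      have h1 : (u :: r.support.tail).Nodup := by
        rw [← Walk.support_eq_cons]; exact hr.support_nodup
      obtain ⟨hur, hrtail⟩ := List.nodup_cons.mp h1
      have h2 : (x :: t.support.tail).Nodup := by
        rw [← Walk.support_eq_cons]; exact htpath.support_nodup
      obtain ⟨hxt, httail⟩ := List.nodup_cons.mp h2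
      refine List.Nodup.append hrtail httail ?_
      intro y hyr hyt
      have hyr' : y ∈ r.support := List.mem_of_mem_tail hyr
      have hyt' : y ∈ t.support := List.mem_of_mem_tail hyt
      have hyq : y ∈ q.support := by
        have : y ∈ (q.takeUntil x hx).support := by
          rwa [ht, Walk.support_reverse, List.mem_reverse] at hyt'
        exact Walk.support_takeUntil_subset q hx this
      rcases hint y hyr' hyq with rfl | rfl
      · exact hur hyr
      · exact hxt hyt
  · rw [Walk.length_append, ht, Walk.length_reverse]
    omega

/-- Walking forward along `c` from `a`, having already traced the path `r` which avoids
`q` except at `u`, we eventually produce a short cycle. -/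
lemma cycleM {u v : W} (q : G.Walk u v) (hq : q.IsPath) :
    ∀ {a : W} (c : G.Walk a v) (r : G.Walk u a), (r.append c).IsPath → ¬ r.Nil →
      (∀ y ∈ r.support, y ∈ q.support → y = u) → a ∉ q.support →
      (∀ e ∈ r.edges, e ∉ q.edges) →
      ∃ (w : W) (cyc : G.Walk w w), cyc.IsCycle ∧
        cyc.length ≤ r.length + c.length + q.length := by
  intro a c
  induction c with
  | nil =>
    intro r _ _ _ ha _
    exact absurd (q.end_mem_support) ha
  | @cons a d v had c' ih =>
    intro r hrc hrnil hint ha hfe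
    have hi : r.append (Walk.cons had c') = (r.concat had).append c' := by
      rw [Walk.concat_eq_append, ← Walk.append_assoc, Walk.cons_nil_append]
    have hrc2 : ((r.concat had).append c').IsPath := by rw [← hi]; exact hrc
    have hr2path : (r.concat had).IsPath := hrc2.of_append_left
    have hsupp2 : (r.concat had).support = r.support ++ [d] := by
      rw [Walk.support_concat]
    have hedges2 : (r.concat had).edges = r.edges ++ [s(a, d)] := by
      rw [Walk.edges_concat, List.concat_eq_append]
    have hfe2 : ∀ e ∈ (r.concat had).edges, e ∉ q.edges := by
      intro e he heq
      rw [hedges2, List.mem_append] at he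
      rcases he with he | he
      · exact hfe e he heq
      · rw [List.mem_singleton] at he
        subst he
        exact ha (Walk.fst_mem_support_of_mem_edges q heq)
    by_cases hd : d ∈ q.support
    · have hd_ne_u : d ≠ u := by
        intro h
        subst h
        have h0 := Walk.isPath_iff_eq_nil.mp hr2path
        have h1 := congrArg Walk.length h0
        rw [Walk.length_concat] at h1
        simp at h1
      have hint2 : ∀ y ∈ (r.concat had).support, y ∈ q.support → y = u ∨ y = d := by
        intro y hy hyq
        rw [hsupp2, List.mem_append] at hy
        rcases hy with hy | hy
        · exact Or.inl (hint y hy hyq)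
        · exact Or.inr (List.mem_singleton.mp hy)
      obtain ⟨w, cyc, hcyc, hlen⟩ := cycleH q hq (r.concat had) hr2path hd hd_ne_u hint2 hfe2
      refine ⟨w, cyc, hcyc, ?_⟩
      rw [Walk.length_concat] at hlen
      rw [Walk.length_cons]
      omega
    · have hint2 : ∀ y ∈ (r.concat had).support, y ∈ q.support → y = u := by
        intro y hy hyq
        rw [hsupp2, List.mem_append] at hy
        rcases hy with hy | hy
        · exact hint y hy hyq
        · exact absurd (List.mem_singleton.mp hy ▸ hyq) hd
      have hnil2 : ¬ (r.concat had).Nil := by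
        rw [Walk.nil_iff_length_eq, Walk.length_concat]
        omega
      obtain ⟨w, cyc, hcyc, hlen⟩ := ih q hq (r.concat had) hrc2 hnil2 hint2 hd hfe2
      refine ⟨w, cyc, hcyc, ?_⟩
      rw [Walk.length_concat] at hlen
      rw [Walk.length_cons]
      omega

/-- Two distinct paths between the same endpoints yield a cycle of length at most the
sum of their lengths. -/
lemma exists_cycle_of_two_paths :
    ∀ {u v : W} (p : G.Walk u v), p.IsPath → ∀ (q : G.Walk u v), q.IsPath → p ≠ q →
      ∃ (w : W) (c : G.Walk w w), c.IsCycle ∧ c.length ≤ p.length + q.length := by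
  intro u v p
  induction p with
  | nil =>
    intro _ q hq hne
    exact absurd (Walk.isPath_iff_eq_nil.mp hq).symm hne
  | @cons u w v h p' ih =>
    intro hp q hq hne
    cases q with
    | nil =>
      exact absurd (Walk.isPath_iff_eq_nil.mp hp) (by simp)
    | @cons _ b _ h2 q2 =>
      by_cases hwb : w = b
      · subst hwb
        by_cases hpq : p' = q2
        · subst hpq
          exact absurd rfl hne
        · obtain ⟨cw, c, hc, hlen⟩ := ih ((Walk.cons_isPath_iff h p').mp hp).1 q2
            ((Walk.cons_isPath_iff h2 q2).mp hq).1 hpq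
          refine ⟨cw, c, hc, ?_⟩
          rw [Walk.length_cons, Walk.length_cons]
          omega
      · have hfe0 : ∀ e ∈ (Walk.cons h (Walk.nil : G.Walk w w)).edges,
            e ∉ (Walk.cons h2 q2).edges := by
          intro e he heq
          simp only [Walk.edges_cons, Walk.edges_nil, List.mem_singleton] at he
          subst he
          exact hwb (aux_eq_snd_of_mem_edges h2 q2 hq heq)
        have hr₀path : (Walk.cons h (Walk.nil : G.Walk w w)).IsPath := by
          rw [Walk.cons_isPath_iff]
          simp [h.ne]
        by_cases hwq : w ∈ (Walk.cons h2 q2).support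
        · have hint : ∀ y ∈ (Walk.cons h (Walk.nil : G.Walk w w)).support,
              y ∈ (Walk.cons h2 q2).support → y = u ∨ y = w := by
            intro y hy _
            simpa using hy
          obtain ⟨cw, c, hc, hlen⟩ := cycleH (Walk.cons h2 q2) hq _ hr₀path hwq h.ne' hint hfe0
          refine ⟨cw, c, hc, ?_⟩
          simp only [Walk.length_cons, Walk.length_nil] at hlen ⊢
          omega
        · have happ : ((Walk.cons h (Walk.nil : G.Walk w w)).append p').IsPath := by
            rw [Walk.cons_nil_append]
            exact hp
          have hint : ∀ y ∈ (Walk.cons h (Walk.nil : G.Walk w w)).support,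
              y ∈ (Walk.cons h2 q2).support → y = u := by
            intro y hy hyq
            simp only [Walk.support_cons, Walk.support_nil, List.mem_cons,
              List.mem_singleton, List.not_mem_nil, or_false] at hy
            rcases hy with rfl | rfl
            · rfl
            · exact absurd hyq hwq
          obtain ⟨cw, c, hc, hlen⟩ := cycleM (Walk.cons h2 q2) hq p' _ happ
            (by simp) hint hwq hfe0
          refine ⟨cw, c, hc, ?_⟩
          simp only [Walk.length_cons, Walk.length_nil] at hlen ⊢
          omega

/-- A vertex on a geodesic whose distance from the base is at least that of the endpoint
must be the endpoint. -/
lemma aux_geo {x₀ w v : W} (g : G.Walk x₀ w) (hlen : g.length = G.dist x₀ w)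
    (hv : v ∈ g.support) (hd : G.dist x₀ w ≤ G.dist x₀ v) : v = w := by
  have h1 : G.dist x₀ v ≤ (g.takeUntil v hv).length := SimpleGraph.dist_le _
  have hsplit : (g.takeUntil v hv).length + (g.dropUntil v hv).length = g.length := by
    have := congrArg Walk.length (g.take_spec hv)
    rwa [Walk.length_append] at this
  have h0 : (g.dropUntil v hv).length = 0 := by omega
  exact Walk.eq_of_length_eq_zero h0

/-- In a graph where every cycle has length at least `2s+3`, a vertex has at most one
neighbour which is not further from the base point `x₀` (among those at distance `≤ s`). -/
lemma aux_unique_low_neighbor (hc : G.Connected) {s : ℕ}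
    (hgirth : ∀ (a : W) (c : G.Walk a a), c.IsCycle → 2 * s + 3 ≤ c.length)
    {x₀ v w₁ w₂ : W} (h1 : G.Adj v w₁) (h2 : G.Adj v w₂)
    (hd1 : G.dist x₀ w₁ ≤ G.dist x₀ v) (hd2 : G.dist x₀ w₂ ≤ G.dist x₀ v)
    (hs1 : G.dist x₀ w₁ ≤ s) (hs2 : G.dist x₀ w₂ ≤ s) : w₁ = w₂ := by
  by_contra hne
  obtain ⟨g1, hg1p, hg1l⟩ := hc.exists_path_of_dist x₀ w₁
  obtain ⟨g2, hg2p, hg2l⟩ := hc.exists_path_of_dist x₀ w₂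
  have hv1 : v ∉ g1.support := fun hmem => h1.ne (aux_geo g1 hg1l hmem hd1)
  have hv2 : v ∉ g2.support := fun hmem => h2.ne (aux_geo g2 hg2l hmem hd2)
  have hp1 : (g1.concat h1.symm).IsPath := aux_concat_isPath hg1p h1.symm hv1
  have hp2 : (g2.concat h2.symm).IsPath := aux_concat_isPath hg2p h2.symm hv2
  have hne12 : g1.concat h1.symm ≠ g2.concat h2.symm := by
    intro heq
    have h3 := congrArg (fun r : G.Walk x₀ v => r.edges.getLast?) heq
    simp only [Walk.edges_concat, List.concat_eq_append,
      List.getLast?_append_cons, List.getLast?_singleton, Option.some.injEq] at h3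
    rcases Sym2.eq_iff.mp h3 with ⟨hh, -⟩ | ⟨hh, -⟩
    · exact hne hh
    · exact h1.ne' hh
  obtain ⟨cw, c, hcyc, hclen⟩ := exists_cycle_of_two_paths _ hp1 _ hp2 hne12
  have hg := hgirth cw c hcyc
  rw [Walk.length_concat, Walk.length_concat, hg1l, hg2l] at hclen
  omega

/-- Counting lemma: in a finite connected graph with all degrees at least `3` and all
cycles of length at least `2s+3`, any nonempty set of vertices of pairwise distance at
most `s` has outer vertex boundary strictly larger than itself. -/
lemma aux_core {W : Type*} [Fintype W] [DecidableEq W] {G : SimpleGraph W} (hc : G.Connected) (s : ℕ)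
    (hgirth : ∀ (a : W) (c : G.Walk a a), c.IsCycle → 2 * s + 3 ≤ c.length)
    [DecidableRel G.Adj]
    (hdeg : ∀ v : W, 3 ≤ G.degree v)
    (E₀ : Finset W) (hne : E₀.Nonempty) (hdiam : ∀ x ∈ E₀, ∀ y ∈ E₀, G.dist x y ≤ s) :
    E₀.card + 1 ≤
      (Finset.univ.filter (fun y => y ∉ E₀ ∧ ∃ x ∈ E₀, G.Adj x y)).card := by
  classical
  obtain ⟨x₀, hx₀⟩ := hne
  set d : W → ℕ := fun y => G.dist x₀ y with hdDef
  set B := Finset.univ.filter (fun y => y ∉ E₀ ∧ ∃ x ∈ E₀, G.Adj x y) with hB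
  set C := Finset.univ.filter
    (fun p : W × W => p.1 ∈ E₀ ∧ G.Adj p.1 p.2 ∧ d p.2 = d p.1 + 1) with hC
  have hEd : ∀ x ∈ E₀, d x ≤ s := fun x hx => hdiam x₀ hx₀ x hx
  have hCmem : ∀ p : W × W, p ∈ C ↔ p.1 ∈ E₀ ∧ G.Adj p.1 p.2 ∧ d p.2 = d p.1 + 1 := by
    intro p; simp [hC]
  -- lower bound on |C|
  have hlower : 2 * E₀.card ≤ C.card := by
    rw [Finset.card_eq_sum_card_fiberwise (f := Prod.fst) (t := E₀)
      (fun p hp => ((hCmem p).mp hp).1)]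
    calc 2 * E₀.card = ∑ _x ∈ E₀, 2 := by
          rw [Finset.sum_const, smul_eq_mul, mul_comm]
      _ ≤ ∑ x ∈ E₀, (C.filter (fun p => p.1 = x)).card := by
          refine Finset.sum_le_sum fun x hx => ?_
          have hchild : 2 ≤ (Finset.univ.filter
              (fun y => G.Adj x y ∧ d y = d x + 1)).card := by
            set good := Finset.univ.filter (fun y => G.Adj x y ∧ d y = d x + 1) with hgood
            set bad := (G.neighborFinset x).filter (fun y => d y ≤ d x) with hbad
            have hsub : G.neighborFinset x ⊆ good ∪ bad := by
              intro y hy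
              have hadj : G.Adj x y := (G.mem_neighborFinset x y).mp hy
              have htri : d y ≤ d x + 1 := by
                have := hc.dist_triangle (u := x₀) (v := x) (w := y)
                rwa [SimpleGraph.dist_eq_one_iff_adj.mpr hadj] at this
              by_cases hle : d y ≤ d x
              · exact Finset.mem_union_right _ (Finset.mem_filter.mpr ⟨hy, hle⟩)
              · refine Finset.mem_union_left _ (Finset.mem_filter.mpr ⟨Finset.mem_univ _, hadj, ?_⟩)
                omega
            have hbad1 : bad.card ≤ 1 := by
              refine Finset.card_le_one.mpr fun y hy z hz => ?_
              obtain ⟨hy1, hy2⟩ := Finset.mem_filter.mp hy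
              obtain ⟨hz1, hz2⟩ := Finset.mem_filter.mp hz
              exact aux_unique_low_neighbor hc hgirth
                ((G.mem_neighborFinset x y).mp hy1) ((G.mem_neighborFinset x z).mp hz1)
                hy2 hz2 (le_trans hy2 (hEd x hx)) (le_trans hz2 (hEd x hx))
            have hdeg3 : 3 ≤ (G.neighborFinset x).card := hdeg x
            have hcard := Finset.card_le_card hsub
            have hcard2 := Finset.card_union_le good bad
            omega
          refine le_trans hchild ?_
          have himg : (Finset.univ.filter (fun y => G.Adj x y ∧ d y = d x + 1)).card
              = ((Finset.univ.filter (fun y => G.Adj x y ∧ d y = d x + 1)).image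
                  (fun y => (x, y))).card := by
            rw [Finset.card_image_of_injective _ (fun a b hab => (Prod.mk.injEq _ _ _ _).mp hab |>.2)]
          rw [himg]
          refine Finset.card_le_card ?_
          intro p hp
          obtain ⟨y, hy, rfl⟩ := Finset.mem_image.mp hp
          obtain ⟨-, hy2, hy3⟩ := Finset.mem_filter.mp hy
          refine Finset.mem_filter.mpr ⟨(hCmem _).mpr ⟨hx, hy2, hy3⟩, rfl⟩
  -- upper bound on |C|
  have hsndinj : Set.InjOn Prod.snd (C : Set (W × W)) := by
    intro p hp q hq hpq
    rw [Finset.mem_coe, hCmem] at hp hq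
    obtain ⟨hp1, hp2, hp3⟩ := hp
    obtain ⟨hq1, hq2, hq3⟩ := hq
    have h1 : p.1 = q.1 := by
      refine aux_unique_low_neighbor hc hgirth (x₀ := x₀) (v := p.2)
        hp2.symm (hpq ▸ hq2.symm) ?_ ?_ (hEd _ hp1) (hEd _ hq1)
      · simp only [hdDef] at hp3 ⊢; omega
      · rw [hpq]; simp only [hdDef] at hq3 ⊢; omega
    exact Prod.ext h1 hpq
  have hupper : C.card ≤ (E₀.card - 1) + B.card := by
    have h1 : C.card = (C.image Prod.snd).card := (Finset.card_image_of_injOn hsndinj).symm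
    rw [h1]
    refine le_trans (Finset.card_le_card (t := (E₀.erase x₀) ∪ B) (fun y hy => ?_)) ?_
    · obtain ⟨p, hp, rfl⟩ := Finset.mem_image.mp hy
      rw [hCmem] at hp
      obtain ⟨hp1, hp2, hp3⟩ := hp
      have hyne : p.2 ≠ x₀ := by
        intro h
        rw [h] at hp3
        simp [hdDef, SimpleGraph.dist_self] at hp3
      by_cases hyE : p.2 ∈ E₀
      · exact Finset.mem_union_left _ (Finset.mem_erase.mpr ⟨hyne, hyE⟩)
      · exact Finset.mem_union_right (E₀.erase x₀)
          (Finset.mem_filter.mpr ⟨Finset.mem_univ _, hyE, p.1, hp1, hp2⟩)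
    · refine le_trans (Finset.card_union_le _ _) ?_
      rw [Finset.card_erase_of_mem hx₀]
  have hE1 : 1 ≤ E₀.card := Finset.card_pos.mpr ⟨x₀, hx₀⟩
  omega

end GraphAux

/-- Theorem 4.2 (large girth case): a space of graphs $X = \bigsqcup_n X_n$ with
$\mathrm{girth}(X_n) \to \infty$ and all vertex degrees at least three does not have
$ULA$.  The space of graphs is modelled as a sigma type with a metric restricting to the
graph metric on each piece, with the pieces drifting apart. -/
theorem large_girth_not_ula {V : ℕ → Type*} [∀ n, Fintype (V n)]
    (G : ∀ n, SimpleGraph (V n)) [∀ n, DecidableRel (G n).Adj]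
    (hconn : ∀ n, (G n).Connected)
    [MetricSpace (Σ n, V n)] (hbg : BoundedGeometry (Σ n, V n))
    (hmetric : ∀ (n : ℕ) (x y : V n),
      dist (⟨n, x⟩ : Σ n, V n) (⟨n, y⟩ : Σ n, V n) = (G n).dist x y)
    (hsep : ∀ D : ℝ, ∃ N : ℕ, ∀ n, N ≤ n → ∀ m, m ≠ n → ∀ (x : V n) (y : V m),
      D ≤ dist (⟨n, x⟩ : Σ n, V n) (⟨m, y⟩ : Σ n, V n))
    (hgirth : ∀ k : ℕ, ∃ N : ℕ, ∀ n, N ≤ n → (k : ℕ∞) ≤ (G n).girth)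
    (hdeg : ∀ (n : ℕ) (v : V n), 3 ≤ (G n).degree v) :
    ¬ ULA (Σ n, V n) := by
  classical
  intro hULA
  obtain ⟨S, hSpos, hF⟩ := hULA 1 one_pos 1 one_pos
  set s := ⌊S⌋₊ with hsdef
  obtain ⟨N₁, hN₁⟩ := hsep (S + 1)
  obtain ⟨N₂, hN₂⟩ := hgirth (2 * s + 3)
  set n := max N₁ N₂ with hndef
  set F : Set (Σ n, V n) := Set.range (fun x : V n => (⟨n, x⟩ : Σ n, V n)) with hFdef
  have hFfin : F.Finite := Set.finite_range _
  obtain ⟨E, hEfin, hEdiam, hcard⟩ := hF F hFfin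
  rw [one_mul] at hcard
  have hcardN : (bdry 1 E ∩ F).ncard < (E ∩ F).ncard := by exact_mod_cast hcard
  have hEFne : (E ∩ F).Nonempty := by
    rcases Set.eq_empty_or_nonempty (E ∩ F) with h | h
    · rw [h, Set.ncard_empty] at hcardN; omega
    · exact h
  obtain ⟨z, hzE, hzF⟩ := hEFne
  obtain ⟨x₀, hx₀⟩ := hzF
  have hx₀E : (⟨n, x₀⟩ : Σ n, V n) ∈ E := by
    rw [show ((⟨n, x₀⟩ : Σ n, V n)) = z from hx₀]; exact hzE
  have hdistE : ∀ z₁ ∈ E, ∀ z₂ ∈ E, dist z₁ z₂ ≤ S := by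
    intro z₁ h₁ z₂ h₂
    have h3 := (EMetric.edist_le_diam_of_mem h₁ h₂).trans hEdiam
    exact (edist_le_ofReal hSpos.le).mp h3
  have hEsub : E ⊆ F := by
    rintro ⟨m, y⟩ hmem
    by_cases hmn : m = n
    · subst hmn; exact ⟨y, rfl⟩
    · exfalso
      have h4 := hN₁ n (le_max_left _ _) m hmn x₀ y
      have h5 := hdistE _ hx₀E _ hmem
      linarith
  set E₀ : Finset (V n) := Finset.univ.filter (fun x => (⟨n, x⟩ : Σ n, V n) ∈ E) with hE₀def
  have hmemE₀ : ∀ x : V n, x ∈ E₀ ↔ (⟨n, x⟩ : Σ n, V n) ∈ E := by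
    intro x; simp [hE₀def]
  have hx₀E₀ : x₀ ∈ E₀ := (hmemE₀ x₀).mpr hx₀E
  have hgirth' : ∀ (a : V n) (c : (G n).Walk a a), c.IsCycle → 2 * s + 3 ≤ c.length := by
    intro a c hcyc
    have h1 : ((2 * s + 3 : ℕ) : ℕ∞) ≤ ((G n).girth : ℕ∞) := hN₂ n (le_max_right _ _)
    have h4 : 2 * s + 3 ≤ (G n).girth := by exact_mod_cast h1
    have h2 : (G n).egirth ≤ (c.length : ℕ∞) := by
      rw [SimpleGraph.egirth]
      exact iInf_le_of_le a (iInf_le_of_le c (iInf_le _ hcyc))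
    have h3 : (G n).girth ≤ c.length := by
      have h5 := ENat.toNat_le_toNat h2 (by simp)
      simpa [SimpleGraph.girth] using h5
    omega
  have hdiam₀ : ∀ x ∈ E₀, ∀ y ∈ E₀, (G n).dist x y ≤ s := by
    intro x hx y hy
    have h1 := hdistE _ ((hmemE₀ x).mp hx) _ ((hmemE₀ y).mp hy)
    rw [hmetric] at h1
    exact Nat.le_floor h1
  have hcore := aux_core (hconn n) s hgirth' (hdeg n) E₀ ⟨x₀, hx₀E₀⟩ hdiam₀
  set B₀ := Finset.univ.filter (fun y => y ∉ E₀ ∧ ∃ x ∈ E₀, (G n).Adj x y) with hB₀def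
  have hBsub : (Sigma.mk n '' (B₀ : Set (V n))) ⊆ bdry 1 E ∩ F := by
    rintro _ ⟨y, hy, rfl⟩
    rw [Finset.mem_coe, hB₀def, Finset.mem_filter] at hy
    obtain ⟨-, hyE, x, hxE, hadj⟩ := hy
    refine ⟨⟨⟨⟨n, x⟩, (hmemE₀ x).mp hxE, ?_⟩, fun hmem => hyE ((hmemE₀ y).mpr hmem)⟩, ⟨y, rfl⟩⟩
    rw [hmetric, SimpleGraph.dist_eq_one_iff_adj.mpr hadj.symm]
    norm_num
  have h5 : B₀.card ≤ (bdry 1 E ∩ F).ncard := by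
    have h6 : (Sigma.mk n '' (B₀ : Set (V n))).ncard = B₀.card := by
      rw [Set.ncard_image_of_injective _ sigma_mk_injective, Set.ncard_coe_finset]
    rw [← h6]
    exact Set.ncard_le_ncard hBsub (hFfin.inter_of_right _)
  have h7 : (E ∩ F).ncard = E₀.card := by
    rw [Set.inter_eq_self_of_subset_left hEsub]
    have hEeq : E = Sigma.mk n '' (E₀ : Set (V n)) := by
      ext w
      constructor
      · intro hw
        obtain ⟨y, rfl⟩ := hEsub hw
        exact ⟨y, (hmemE₀ y).mpr hw, rfl⟩
      · rintro ⟨y, hy, rfl⟩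
        exact (hmemE₀ y).mp (Finset.mem_coe.mp hy)
    rw [hEeq, Set.ncard_image_of_injective _ sigma_mk_injective, Set.ncard_coe_finset]
  omega
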